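/- Let Λ be a square domain, β > 0, x > 0, A ⊆ Λ nonempty, and let h₁, h₂ : ∂Λ → ℤ with h₁(j) ≤ h₂(j) for all j ∈ ∂Λ. Then P^IV_{β,Λ,h₁}( max_{j∈A} m_j ≥ x ) ≤ P^IV_{β,Λ,h₂}( max_{j∈A} m_j ≥ x ) and P^IV_{β,Λ,h₁}( min_{j∈A} m_j ≥ −x ) ≤ P^IV_{β,Λ,h₂}( min_{j∈A} m_j ≥ −x ). -/

import Mathlib

open scoped BigOperators
open MeasureTheory

noncomputable section

namespace IVGFF

attribute [local instance] Classical.propDecidable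

/-- Vertices of the square lattice. -/
abbrev V : Type := ℤ × ℤ

/-- The square box with corner `c` and side-length `L`. -/
def box (c : V) (L : ℕ) : Finset V :=
  (Finset.Icc c.1 (c.1 + (L : ℤ) - 1)) ×ˢ (Finset.Icc c.2 (c.2 + (L : ℤ) - 1))

/-- The boundary of the box with corner `c` and side-length `L`. -/
def bdry (c : V) (L : ℕ) : Finset V :=
  (box c L).filter fun j =>
    j.1 = c.1 ∨ j.1 = c.1 + (L : ℤ) - 1 ∨ j.2 = c.2 ∨ j.2 = c.2 + (L : ℤ) - 1

/-- The interior of the box with corner `c` and side-length `L`. -/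
def intr (c : V) (L : ℕ) : Finset V := box c L \ bdry c L

/-- Adjacency in the square lattice: `ℓ¹`-distance one. -/
def adj (j l : V) : Prop := |j.1 - l.1| + |j.2 - l.2| = 1

/-- The edges of the box (each edge appearing once, in a fixed orientation). -/
def edges (c : V) (L : ℕ) : Finset (V × V) :=
  ((box c L) ×ˢ (box c L)).filter fun p =>
    adj p.1 p.2 ∧ (p.1.1 < p.2.1 ∨ (p.1.1 = p.2.1 ∧ p.1.2 < p.2.2))

/-- Graph distance in the box graph, which coincides with `ℓ¹`-distance. -/
def gdist (j l : V) : ℕ := (|j.1 - l.1| + |j.2 - l.2|).toNat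

/-- Distance between two finite sets of vertices. -/
def distFS (A B : Finset V) : ℕ := sInf {n : ℕ | ∃ j ∈ A, ∃ l ∈ B, gdist j l = n}

/-- Inner product `⟨f, g⟩ = Σ_{j ∈ Λ} f_j g_j` of real fields. -/
def dot (c : V) (L : ℕ) (f g : V → ℝ) : ℝ := ∑ j ∈ box c L, f j * g j

/-- Inner product of an integer field with a real field. -/
def dotI (c : V) (L : ℕ) (m : V → ℤ) (f : V → ℝ) : ℝ := ∑ j ∈ box c L, (m j : ℝ) * f j

/-- The graph Laplacian `(Δ_Λ f)_j = Σ_{l ∼ j} (f_l − f_j)`. -/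
def lap (c : V) (L : ℕ) (f : V → ℝ) : V → ℝ :=
  fun j => ∑ l ∈ (box c L).filter (fun l => adj j l), (f l - f j)

/-- Dirichlet energy `Σ_{j∼l} (g_j − g_l)²` for integer fields. -/
def energyI (c : V) (L : ℕ) (g : V → ℤ) : ℝ :=
  ∑ p ∈ edges c L, ((g p.1 : ℝ) - (g p.2 : ℝ)) ^ 2

/-- Dirichlet energy `Σ_{j∼l} (φ_j − φ_l)²` for real fields. -/
def energyR (c : V) (L : ℕ) (φ : V → ℝ) : ℝ :=
  ∑ p ∈ edges c L, (φ p.1 - φ p.2) ^ 2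

/-- Integer-valued configurations with boundary condition `h` (extended by `0` off the box). -/
def ivConfigs (c : V) (L : ℕ) (h : V → ℤ) : Set (V → ℤ) :=
  {g | (∀ j ∈ bdry c L, g j = h j) ∧ ∀ j, j ∉ box c L → g j = 0}

/-- The IV-GFF Boltzmann weight. -/
def ivWeight (c : V) (L : ℕ) (β : ℝ) (g : V → ℤ) : ℝ :=
  Real.exp (-(β / 2) * energyI c L g)

/-- Partition function of the IV-GFF. -/
def ivZ (c : V) (L : ℕ) (β : ℝ) (h : V → ℤ) : ℝ :=
  ∑' g : ↥(ivConfigs c L h), ivWeight c L β g.1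

/-- Probability of an event under the IV-GFF `P^IV_{β,Λ,h}`. -/
def ivProb (c : V) (L : ℕ) (β : ℝ) (h : V → ℤ) (A : Set (V → ℤ)) : ℝ :=
  (∑' g : ↥(ivConfigs c L h ∩ A), ivWeight c L β g.1) / ivZ c L β h

/-- Expectation under the IV-GFF `E^IV_{β,Λ,h}`. -/
def ivExp (c : V) (L : ℕ) (β : ℝ) (h : V → ℤ) (F : (V → ℤ) → ℝ) : ℝ :=
  (∑' g : ↥(ivConfigs c L h), ivWeight c L β g.1 * F g.1) / ivZ c L β h

/-- Probability under the symmetrized IV-GFF `P^{IV-Sym}_{β,Λ,h}`. -/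
def ivSymProb (c : V) (L : ℕ) (β : ℝ) (h : V → ℤ) (A : Set (V → ℤ)) : ℝ :=
  (ivProb c L β h A + ivProb c L β (fun j => -h j) A) / 2

/-- Expectation under the symmetrized IV-GFF `E^{IV-Sym}_{β,Λ,h}`. -/
def ivSymExp (c : V) (L : ℕ) (β : ℝ) (h : V → ℤ) (F : (V → ℤ) → ℝ) : ℝ :=
  (ivExp c L β h F + ivExp c L β (fun j => -h j) F) / 2

/-- Extension of interior values `x` by boundary values `h` (and by `0` off the box). -/
def extend (c : V) (L : ℕ) (h : V → ℝ) (x : ↥(intr c L) → ℝ) : V → ℝ :=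
  fun j => if hj : j ∈ intr c L then x ⟨j, hj⟩ else if j ∈ bdry c L then h j else 0

/-- Partition function of the (real-valued) GFF. -/
def gffZ (c : V) (L : ℕ) (β : ℝ) (h : V → ℝ) : ℝ :=
  ∫ x : ↥(intr c L) → ℝ, Real.exp (-(β / 2) * energyR c L (extend c L h x))

/-- Expectation under the GFF `E^GFF_{β,Λ,h}`. -/
def gffExp (c : V) (L : ℕ) (β : ℝ) (h : V → ℝ) (F : (V → ℝ) → ℝ) : ℝ :=
  (∫ x : ↥(intr c L) → ℝ,
      F (extend c L h x) * Real.exp (-(β / 2) * energyR c L (extend c L h x))) / gffZ c L β h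

/-- Expectation under the symmetrized GFF `E^{GFF-Sym}_{β,Λ,h}`. -/
def gffSymExp (c : V) (L : ℕ) (β : ℝ) (h : V → ℝ) (F : (V → ℝ) → ℝ) : ℝ :=
  (gffExp c L β h F + gffExp c L β (fun j => -h j) F) / 2

/-- Complex-valued expectation under the GFF. -/
def gffExpC (c : V) (L : ℕ) (β : ℝ) (h : V → ℝ) (F : (V → ℝ) → ℂ) : ℂ :=
  (∫ x : ↥(intr c L) → ℝ,
      F (extend c L h x) * (Real.exp (-(β / 2) * energyR c L (extend c L h x)) : ℂ)) /
    (gffZ c L β h : ℂ)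

/-- One-step transition kernel of the simple random walk on the box, killed at the boundary:
rate `1/4` from an interior vertex to each neighbour. -/
def rwKernel (c : V) (L : ℕ) (j k : V) : ℝ :=
  if j ∈ intr c L ∧ adj j k then 1 / 4 else 0

/-- `n`-step transition probabilities of the killed walk. -/
def rwIter (c : V) (L : ℕ) : ℕ → V → V → ℝ
  | 0 => fun j k => if j = k then 1 else 0
  | n + 1 => fun j k => ∑ m ∈ box c L, rwIter c L n j m * rwKernel c L m k

/-- The Green's function `G_Λ(j,l)`: expected occupation time of `l` (for `l` interior) by the
continuous-time simple random walk started at `j` and killed at `∂Λ`; each interior holding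
time has expectation `1/4`. -/
def green (c : V) (L : ℕ) (j l : V) : ℝ := (1 / 4) * ∑' n : ℕ, rwIter c L n j l

/-- The harmonic measure `Hm_Λ(j,l)`: for `l ∈ ∂Λ`, the probability that the walk started
at `j` first hits the boundary at `l`. -/
def harmMeas (c : V) (L : ℕ) (j l : V) : ℝ := ∑' n : ℕ, rwIter c L n j l

/-- A real, even, normalized trigonometric polynomial
`λ(x) = 1 + 2 Σ_{q=1}^N λ̂_q cos(qx)` with coefficients `coef` and degree `N`. -/
def trigPoly (coef : ℕ → ℝ) (N : ℕ) (x : ℝ) : ℝ :=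
  1 + 2 * ∑ q ∈ Finset.Icc 1 N, coef q * Real.cos ((q : ℝ) * x)

/-- `(Γ,η,θ)`-sub-Gaussian coefficients (at inverse temperature `β`). -/
def subGaussian (β Γ η θ : ℝ) (coef : ℕ → ℝ) : Prop :=
  ∀ q : ℕ, 1 ≤ q → |coef q| ≤ Γ * Real.exp ((η + θ / β) * (q : ℝ) ^ 2)

/-- The Fejér kernel `F_N(x) = 1 + Σ_{q=1}^{N−1} 2(1 − q/N) cos(qx)`. -/
def fejer (N : ℕ) (x : ℝ) : ℝ :=
  1 + ∑ q ∈ Finset.Icc 1 (N - 1), 2 * (1 - (q : ℝ) / (N : ℝ)) * Real.cos ((q : ℝ) * x)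

/-- The (finite) support of a charge density within the box. -/
def suppF (c : V) (L : ℕ) (ρ : V → ℤ) : Finset V := (box c L).filter fun j => ρ j ≠ 0

/-- `ρ` is a charge density on the box: nonempty support contained in the interior. -/
def IsDensity (c : V) (L : ℕ) (ρ : V → ℤ) : Prop :=
  (∃ j, ρ j ≠ 0) ∧ ∀ j, ρ j ≠ 0 → j ∈ intr c L

/-- The total charge `Q(ρ)`. -/
def Qcharge (c : V) (L : ℕ) (ρ : V → ℤ) : ℤ := ∑ j ∈ box c L, ρ j

/-- Diameter of a finite set of vertices in graph distance. -/
def diamF (s : Finset V) : ℕ := s.sup fun j => s.sup fun l => gdist j l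

/-- The modified diameter `d_Λ(ρ)`. -/
def dLam (c : V) (L : ℕ) (ρ : V → ℤ) : ℕ :=
  if Qcharge c L ρ ≠ 0 then
    max (diamF (suppF c L ρ)) (distFS (suppF c L ρ) (bdry c L))
  else diamF (suppF c L ρ)

/-- `‖ρ‖₂² = Σ_j ρ_j²`. -/
def norm2sq (c : V) (L : ℕ) (ρ : V → ℤ) : ℝ := ∑ j ∈ box c L, ((ρ j : ℝ)) ^ 2

/-- The `2^k × 2^k` square with corner `a`, intersected with the box. -/
def sqAt (c : V) (L k : ℕ) (a : V) : Finset V :=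
  (box c L).filter fun j =>
    j.1 - a.1 ∈ Finset.Icc (0 : ℤ) (2 ^ k - 1) ∧ j.2 - a.2 ∈ Finset.Icc (0 : ℤ) (2 ^ k - 1)

/-- `s` is a `2^k × 2^k` square in the box. -/
def IsSqr (c : V) (L k : ℕ) (s : Finset V) : Prop :=
  s.card = min (box c L).card (2 ^ (2 * k)) ∧ ∃ a ∈ box c L, s = sqAt c L k a

/-- `S` is a cover of the support of `ρ` by `2^k × 2^k` squares. -/
def IsCover (c : V) (L k : ℕ) (ρ : V → ℤ) (S : Finset (Finset V)) : Prop :=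
  (∀ s ∈ S, IsSqr c L k s) ∧ ∀ j ∈ suppF c L ρ, ∃ s ∈ S, j ∈ s

/-- `S` is a minimal cover of the support of `ρ` by `2^k × 2^k` squares. -/
def IsMinCover (c : V) (L k : ℕ) (ρ : V → ℤ) (S : Finset (Finset V)) : Prop :=
  IsCover c L k ρ S ∧ ∀ S' : Finset (Finset V), IsCover c L k ρ S' → S.card ≤ S'.card

/-- `n(ρ) = ⌈log₂(M d_Λ(ρ)^α)⌉` with `M = 2^16`. -/
def nIdx (c : V) (L : ℕ) (α : ℝ) (ρ : V → ℤ) : ℕ :=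
  ⌈Real.logb 2 ((2 : ℝ) ^ 16 * (dLam c L ρ : ℝ) ^ α)⌉₊

/-- The separated part `S_k^sep(ρ)` of a cover `S` at scale `k ≥ 1`, with `M = 2^16`. -/
def sepOf (c : V) (L k : ℕ) (α : ℝ) (ρ : V → ℤ) (S : Finset (Finset V)) : Finset (Finset V) :=
  if 1 < S.card then
    S.filter fun s => ∀ s' ∈ S, s' ≠ s →
      (2 : ℝ) * 2 ^ 16 * (2 : ℝ) ^ (α * ((k : ℝ) + 1)) ≤ (distFS s s' : ℝ)
  else if Qcharge c L ρ = 0 then ∅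
  else if 2 ^ (k + 1) ≤ distFS (suppF c L ρ) (bdry c L) then S else ∅

end IVGFF

attribute [local instance] Classical.propDecidable

namespace IVGFF

variable {L : ℕ}

/-- Interior configurations. -/
abbrev Cfg (L : ℕ) : Type := (↥(intr 0 L) : Type) → ℤ

/-- Extension of an interior configuration by boundary values `h` and `0` off the box. -/
def extZ (L : ℕ) (h : V → ℤ) (φ : Cfg L) : V → ℤ :=
  fun j => if hj : j ∈ intr 0 L then φ ⟨j, hj⟩ else if j ∈ bdry 0 L then h j else 0

lemma mem_box_iff {j : V} :
    j ∈ box 0 L ↔ 0 ≤ j.1 ∧ j.1 ≤ (L : ℤ) - 1 ∧ 0 ≤ j.2 ∧ j.2 ≤ (L : ℤ) - 1 := by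
  simp [box, Finset.mem_product, Finset.mem_Icc, and_assoc]

lemma mem_bdry_iff {j : V} :
    j ∈ bdry 0 L ↔ j ∈ box 0 L ∧
      (j.1 = 0 ∨ j.1 = (L : ℤ) - 1 ∨ j.2 = 0 ∨ j.2 = (L : ℤ) - 1) := by
  simp [bdry, Finset.mem_filter]

lemma mem_intr_iff {j : V} :
    j ∈ intr 0 L ↔ j ∈ box 0 L ∧
      ¬(j.1 = 0 ∨ j.1 = (L : ℤ) - 1 ∨ j.2 = 0 ∨ j.2 = (L : ℤ) - 1) := by
  simp only [intr, Finset.mem_sdiff, mem_bdry_iff]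
  tauto

lemma extZ_mem (h : V → ℤ) (φ : Cfg L) : extZ L h φ ∈ ivConfigs 0 L h := by
  constructor
  · intro j hj
    have hji : j ∉ intr 0 L := by
      simp [intr, Finset.mem_sdiff, hj]
    simp [extZ, hji, hj]
  · intro j hj
    have h1 : j ∉ intr 0 L := fun hc => hj (Finset.mem_sdiff.1 hc).1
    have h2 : j ∉ bdry 0 L := fun hc => hj (Finset.mem_filter.1 hc).1
    simp [extZ, h1, h2]

lemma extZ_injective (h : V → ℤ) : Function.Injective (extZ L h) := by
  intro φ ψ he
  funext j
  have := congrFun he j.1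
  simpa [extZ, j.2] using this

lemma range_extZ (h : V → ℤ) : Set.range (extZ L h) = ivConfigs 0 L h := by
  apply Set.Subset.antisymm
  · rintro _ ⟨φ, rfl⟩; exact extZ_mem h φ
  · rintro g ⟨hgb, hgo⟩
    refine ⟨fun j => g j.1, funext fun j => ?_⟩
    by_cases hj : j ∈ intr 0 L
    · simp [extZ, hj]
    · by_cases hb : j ∈ bdry 0 L
      · simp [extZ, hj, hb, hgb j hb]
      · have hbox : j ∉ box 0 L := by
          intro hbox
          exact hj (Finset.mem_sdiff.2 ⟨hbox, hb⟩)
        simp [extZ, hj, hb, hgo j hbox]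

lemma ivZ_eq (β : ℝ) (h : V → ℤ) :
    ivZ 0 L β h = ∑' φ : Cfg L, ivWeight 0 L β (extZ L h φ) := by
  rw [ivZ, tsum_subtype]
  rw [← Function.Injective.tsum_eq (extZ_injective h)
      (f := (ivConfigs 0 L h).indicator (ivWeight 0 L β))
      (Set.support_indicator_subset.trans (range_extZ h).symm.subset)]
  exact tsum_congr fun φ => by simp [Set.indicator_apply, extZ_mem h φ]

lemma ivNum_eq (β : ℝ) (h : V → ℤ) (B : Set (V → ℤ)) :
    (∑' g : ↥(ivConfigs 0 L h ∩ B), ivWeight 0 L β g.1)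
      = ∑' φ : Cfg L, (if extZ L h φ ∈ B then ivWeight 0 L β (extZ L h φ) else 0) := by
  rw [tsum_subtype]
  rw [← Function.Injective.tsum_eq (extZ_injective h)
      (f := (ivConfigs 0 L h ∩ B).indicator (ivWeight 0 L β))
      (Set.support_indicator_subset.trans
        (Set.inter_subset_left.trans (range_extZ h).symm.subset))]
  exact tsum_congr fun φ => by
    by_cases hb : extZ L h φ ∈ B <;> simp [Set.indicator_apply, hb, extZ_mem h φ]


lemma quad_ineq (a b c d : ℝ) :
    (min a c - min b d) ^ 2 + (max a c - max b d) ^ 2 ≤ (a - b) ^ 2 + (c - d) ^ 2 := by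
  rcases le_total a c with h | h <;> rcases le_total b d with h' | h' <;>
    simp only [min_def, max_def] <;> split_ifs <;> nlinarith [sq_nonneg (a-b), sq_nonneg (c-d)]

lemma vert_edge_mem (hL : 2 < L) {j1 t : ℤ} (h1 : 0 ≤ j1) (h2 : j1 ≤ (L : ℤ) - 1)
    (ht0 : 0 ≤ t) (ht : t + 1 ≤ (L : ℤ) - 1) :
    ((j1, t), (j1, t + 1)) ∈ edges 0 L := by
  refine Finset.mem_filter.2 ⟨Finset.mem_product.2 ⟨?_, ?_⟩, ?_, ?_⟩
  · refine mem_box_iff.2 ?_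
    dsimp only
    omega
  · refine mem_box_iff.2 ?_
    dsimp only
    omega
  · show adj _ _
    have h' : t - (t + 1) = -1 := by ring
    simp [adj, h']
  · right
    refine ⟨rfl, ?_⟩
    dsimp only
    omega

lemma site_bound (hL : 2 < L) (h : V → ℤ) (g : V → ℤ)
    (hgb : ∀ j ∈ bdry 0 L, g j = h j) {j : V} (hj : j ∈ intr 0 L) :
    ((g j : ℝ) - (h (j.1, 0) : ℝ)) ^ 2 ≤ (L : ℝ) * energyI 0 L g := by
  classical
  obtain ⟨hb, hnb⟩ := mem_intr_iff.1 hj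
  obtain ⟨hx0, hx1, hy0, hy1⟩ := mem_box_iff.1 hb
  push_neg at hnb
  obtain ⟨hn1, hn2, hn3, hn4⟩ := hnb
  set m : ℕ := j.2.toNat with hmdef
  have hm : (m : ℤ) = j.2 := Int.toNat_of_nonneg hy0
  set f : ℕ → ℝ := fun t => (g (j.1, (t : ℤ)) : ℝ) with hfdef
  have key1 : ∑ t ∈ Finset.range m, (f (t + 1) - f t) ^ 2 ≤ energyI 0 L g := by
    have hinj : ∀ a ∈ Finset.range m, ∀ b ∈ Finset.range m,
        (fun t : ℕ => ((j.1, (t : ℤ)), (j.1, (t : ℤ) + 1))) a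
          = (fun t : ℕ => ((j.1, (t : ℤ)), (j.1, (t : ℤ) + 1))) b → a = b := by
      intro a _ b _ hab
      simpa using congrArg (fun p : V × V => p.1.2) hab
    have himg : (Finset.range m).image (fun t : ℕ => ((j.1, (t : ℤ)), (j.1, (t : ℤ) + 1)))
        ⊆ edges 0 L := by
      intro p hp
      simp only [Finset.mem_image] at hp
      obtain ⟨t, ht, rfl⟩ := hp
      have ht' : (t : ℤ) < m := by exact_mod_cast Finset.mem_range.1 ht
      exact vert_edge_mem hL hx0 hx1 (by positivity) (by omega)
    calc ∑ t ∈ Finset.range m, (f (t + 1) - f t) ^ 2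
        = ∑ p ∈ (Finset.range m).image
            (fun t : ℕ => ((j.1, (t : ℤ)), (j.1, (t : ℤ) + 1))),
            ((g p.1 : ℝ) - (g p.2 : ℝ)) ^ 2 := by
          rw [Finset.sum_image hinj]
          refine Finset.sum_congr rfl fun t _ => ?_
          simp only [hfdef]
          rw [show (((t : ℕ) + 1 : ℕ) : ℤ) = (t : ℤ) + 1 by push_cast; ring]
          ring
      _ ≤ energyI 0 L g :=
          Finset.sum_le_sum_of_subset_of_nonneg himg fun _ _ _ => sq_nonneg _
  have tel : f m - f 0 = (g j : ℝ) - (h (j.1, 0) : ℝ) := by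
    have hb0 : (j.1, (0 : ℤ)) ∈ bdry 0 L :=
      mem_bdry_iff.2 ⟨mem_box_iff.2 ⟨hx0, hx1, le_refl 0, by omega⟩, by right; right; left; rfl⟩
    have h0 : g (j.1, (0 : ℤ)) = h (j.1, 0) := hgb _ hb0
    have hfm : f m = (g j : ℝ) := by
      simp only [hfdef, hm]
    rw [hfm]
    simp [hfdef, h0]
  have cs : (f m - f 0) ^ 2 ≤ (m : ℝ) * ∑ t ∈ Finset.range m, (f (t + 1) - f t) ^ 2 := by
    have hcs := sq_sum_le_card_mul_sum_sq (s := Finset.range m)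
      (f := fun t => f (t + 1) - f t)
    rwa [Finset.sum_range_sub f m, Finset.card_range] at hcs
  have hmL : (m : ℝ) ≤ (L : ℝ) := by
    have : (m : ℤ) ≤ (L : ℤ) := by omega
    exact_mod_cast this
  have hS0 : (0 : ℝ) ≤ ∑ t ∈ Finset.range m, (f (t + 1) - f t) ^ 2 :=
    Finset.sum_nonneg fun _ _ => sq_nonneg _
  have hL0 : (0 : ℝ) ≤ (L : ℝ) := by positivity
  rw [tel] at cs
  linarith [cs, mul_le_mul_of_nonneg_right hmL hS0,
    mul_le_mul_of_nonneg_left key1 hL0]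


lemma one_one_mem_intr (hL : 2 < L) : ((1, 1) : V) ∈ intr 0 L := by
  refine mem_intr_iff.2 ⟨mem_box_iff.2 ?_, ?_⟩ <;> dsimp only <;> omega

lemma energyI_nonneg (g : V → ℤ) : 0 ≤ energyI 0 L g :=
  Finset.sum_nonneg fun _ _ => sq_nonneg _

lemma weight_le (hL : 2 < L) {β : ℝ} (hβ : 0 < β) (h : V → ℤ) (g : V → ℤ)
    (hgb : ∀ j ∈ bdry 0 L, g j = h j) :
    ivWeight 0 L β g ≤ Real.exp (-(β / (2 * ((intr 0 L).card : ℝ) * L)) *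
      ∑ j ∈ intr 0 L, ((g j : ℝ) - (h (j.1, 0) : ℝ)) ^ 2) := by
  have hNpos : 0 < (intr 0 L).card := Finset.card_pos.2 ⟨(1, 1), one_one_mem_intr hL⟩
  set N : ℝ := ((intr 0 L).card : ℝ) with hNdef
  have hN : 0 < N := by rw [hNdef]; exact_mod_cast hNpos
  have hLpos : (0 : ℝ) < L := by exact_mod_cast (by omega : 0 < L)
  rw [ivWeight]
  apply Real.exp_le_exp.2
  have hsum : ∑ j ∈ intr 0 L, ((g j : ℝ) - (h (j.1, 0) : ℝ)) ^ 2
      ≤ N * ((L : ℝ) * energyI 0 L g) := by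
    calc ∑ j ∈ intr 0 L, ((g j : ℝ) - (h (j.1, 0) : ℝ)) ^ 2
        ≤ ∑ _j ∈ intr 0 L, (L : ℝ) * energyI 0 L g :=
          Finset.sum_le_sum fun j hj => site_bound hL h g hgb hj
      _ = N * ((L : ℝ) * energyI 0 L g) := by
          rw [Finset.sum_const, nsmul_eq_mul]
  have hmul := mul_le_mul_of_nonneg_left hsum
    (le_of_lt (by positivity : (0 : ℝ) < β / (2 * N * L)))
  have heq : β / (2 * N * L) * (N * ((L : ℝ) * energyI 0 L g))
      = β / 2 * energyI 0 L g := by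
    field_simp
  rw [heq] at hmul
  linarith

lemma summable_gauss {c : ℝ} (hc : 0 < c) (K : ℤ) :
    Summable (fun n : ℤ => Real.exp (-c * ((n : ℝ) - (K : ℝ)) ^ 2)) := by
  have hgeo : Summable (fun n : ℕ => Real.exp (-c) ^ n) :=
    summable_geometric_of_lt_one (Real.exp_pos _).le
      (Real.exp_lt_one_iff.2 (by linarith))
  have hnat : Summable (fun n : ℕ => Real.exp (-c * ((n : ℤ) : ℝ) ^ 2)) := by
    refine Summable.of_nonneg_of_le (fun n => (Real.exp_pos _).le) (fun n => ?_) hgeo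
    rw [← Real.exp_nat_mul]
    apply Real.exp_le_exp.2
    have hn2 : (n : ℝ) ≤ (n : ℝ) ^ 2 := by
      have : (n : ℝ) * 1 ≤ (n : ℝ) * (n : ℝ) ∨ n = 0 := by
        rcases Nat.eq_zero_or_pos n with h0 | h0
        · exact Or.inr h0
        · exact Or.inl (mul_le_mul_of_nonneg_left
            (by exact_mod_cast h0 : (1 : ℝ) ≤ n) (Nat.cast_nonneg n))
      rcases this with h | h
      · nlinarith
      · simp [h]
    push_cast
    nlinarith
  have base : Summable (fun n : ℤ => Real.exp (-c * ((n : ℝ)) ^ 2)) := by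
    apply Summable.of_nat_of_neg
    · exact hnat.congr fun n => by push_cast; ring_nf
    · refine hnat.congr fun n => ?_
      push_cast
      ring_nf
  have hshift := (Equiv.subRight K).summable_iff
    (f := fun n : ℤ => Real.exp (-c * ((n : ℝ)) ^ 2))
  refine (hshift.2 base).congr fun n => ?_
  simp [Equiv.subRight]

lemma summable_pi_fin : ∀ (n : ℕ) (F : Fin n → ℤ → ℝ), (∀ i x, 0 ≤ F i x) →
    (∀ i, Summable (F i)) → Summable (fun φ : Fin n → ℤ => ∏ i, F i (φ i)) := by
  intro n
  induction n with
  | zero =>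
    intro F _ _
    have h1 : (fun φ : Fin 0 → ℤ => ∏ i, F i (φ i)) = fun _ => 1 := by
      funext φ; simp
    rw [h1]
    haveI : Unique (Fin 0 → ℤ) := Pi.uniqueOfIsEmpty _
    haveI : Finite (Fin 0 → ℤ) := Finite.of_subsingleton
    exact Summable.of_finite
  | succ n ih =>
    intro F h0 hs
    have hsum2 : Summable (fun ψ : Fin n → ℤ => ∏ i, F i.succ (ψ i)) :=
      ih (fun i => F i.succ) (fun i x => h0 i.succ x) fun i => hs i.succ
    have hf : (0 : ℤ → ℝ) ≤ F 0 := fun x => h0 0 x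
    have hg : (0 : (Fin n → ℤ) → ℝ) ≤ fun ψ : Fin n → ℤ => ∏ i, F i.succ (ψ i) :=
      fun ψ => Finset.prod_nonneg fun i _ => h0 i.succ (ψ i)
    have hprod' := Summable.mul_of_nonneg (hs 0) hsum2 hf hg
    have hprod : Summable (fun p : ℤ × (Fin n → ℤ) => F 0 p.1 * ∏ i, F i.succ (p.2 i)) :=
      hprod'.congr fun p => rfl
    rw [← (Fin.consEquiv fun _ : Fin (n + 1) => ℤ).summable_iff]
    refine hprod.congr fun p => ?_
    show F 0 p.1 * ∏ i, F i.succ (p.2 i) = ∏ i, F i (Fin.cons (α := fun _ => ℤ) p.1 p.2 i)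
    rw [Fin.prod_univ_succ]
    simp

lemma summable_pi {ι : Type} [Fintype ι] (F : ι → ℤ → ℝ) (h0 : ∀ i x, 0 ≤ F i x)
    (hs : ∀ i, Summable (F i)) : Summable (fun φ : ι → ℤ => ∏ i, F i (φ i)) := by
  classical
  obtain ⟨n, ⟨e⟩⟩ : ∃ n, Nonempty (ι ≃ Fin n) := ⟨Fintype.card ι, ⟨Fintype.equivFin ι⟩⟩
  have hfin := summable_pi_fin n (fun k => F (e.symm k))
    (fun k x => h0 (e.symm k) x) fun k => hs (e.symm k)
  rw [← (Equiv.arrowCongr e.symm (Equiv.refl ℤ)).summable_iff]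
  refine hfin.congr fun ψ => ?_
  show (∏ k, F (e.symm k) (ψ k))
      = ∏ i, F i ((Equiv.arrowCongr e.symm (Equiv.refl ℤ)) ψ i)
  calc (∏ k, F (e.symm k) (ψ k))
      = ∏ i, F (e.symm (e i)) (ψ (e i)) := (Equiv.prod_comp e _).symm
    _ = ∏ i, F i ((Equiv.arrowCongr e.symm (Equiv.refl ℤ)) ψ i) := by
        refine Finset.prod_congr rfl fun i _ => ?_
        simp [Equiv.arrowCongr]

set_option maxHeartbeats 1000000 in
lemma summable_weight (hL : 2 < L) {β : ℝ} (hβ : 0 < β) (h : V → ℤ) :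
    Summable (fun φ : Cfg L => ivWeight 0 L β (extZ L h φ)) := by
  classical
  have hNpos : 0 < (intr 0 L).card := Finset.card_pos.2 ⟨(1, 1), one_one_mem_intr hL⟩
  set N : ℝ := ((intr 0 L).card : ℝ) with hNdef
  have hN : 0 < N := by rw [hNdef]; exact_mod_cast hNpos
  have hLpos : (0 : ℝ) < L := by exact_mod_cast (by omega : 0 < L)
  set c : ℝ := β / (2 * N * L) with hcdef
  have hcpos : 0 < c := by positivity
  have hdom : ∀ φ : Cfg L, ivWeight 0 L β (extZ L h φ)
      ≤ ∏ j : ↥(intr 0 L), Real.exp (-c * ((φ j : ℝ) - (h ((j : V).1, 0) : ℝ)) ^ 2) := by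
    intro φ
    have h1 := weight_le hL hβ h (extZ L h φ) (extZ_mem h φ).1
    refine h1.trans (le_of_eq ?_)
    calc Real.exp (-(β / (2 * N * (L : ℝ))) *
          ∑ j ∈ intr 0 L, ((extZ L h φ j : ℝ) - (h (j.1, 0) : ℝ)) ^ 2)
        = ∏ j ∈ intr 0 L,
            Real.exp (-c * ((extZ L h φ j : ℝ) - (h (j.1, 0) : ℝ)) ^ 2) := by
          rw [← Real.exp_sum, Finset.mul_sum]
      _ = ∏ j : ↥(intr 0 L),
            Real.exp (-c * ((extZ L h φ (j : V) : ℝ) - (h ((j : V).1, 0) : ℝ)) ^ 2) :=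
          (Finset.prod_coe_sort _ _).symm
      _ = ∏ j : ↥(intr 0 L), Real.exp (-c * ((φ j : ℝ) - (h ((j : V).1, 0) : ℝ)) ^ 2) := by
          refine Finset.prod_congr rfl fun j _ => ?_
          have hjv : extZ L h φ (j : V) = φ j := by
            simp [extZ, j.2]
          rw [hjv]
  have hsum := summable_pi
    (fun (j : ↥(intr 0 L)) (n : ℤ) => Real.exp (-c * ((n : ℝ) - (h ((j : V).1, 0) : ℝ)) ^ 2))
    (fun j n => (Real.exp_pos _).le) (fun j => summable_gauss hcpos (h ((j : V).1, 0)))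
  exact Summable.of_nonneg_of_le (fun φ => (Real.exp_pos _).le) hdom
    (hsum.congr fun φ => rfl)

lemma extZ_inf (h₁ h₂ : V → ℤ) (hle : ∀ j ∈ bdry 0 L, h₁ j ≤ h₂ j) (a b : Cfg L) (j : V) :
    extZ L h₁ (a ⊓ b) j = min (extZ L h₁ a j) (extZ L h₂ b j) := by
  by_cases hj : j ∈ intr 0 L
  · simp [extZ, hj, Pi.inf_apply]
  · by_cases hb : j ∈ bdry 0 L
    · simp only [extZ, dif_neg hj, if_pos hb]
      exact (min_eq_left (hle j hb)).symm
    · simp [extZ, hj, hb]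

lemma extZ_sup (h₁ h₂ : V → ℤ) (hle : ∀ j ∈ bdry 0 L, h₁ j ≤ h₂ j) (a b : Cfg L) (j : V) :
    extZ L h₂ (a ⊔ b) j = max (extZ L h₁ a j) (extZ L h₂ b j) := by
  by_cases hj : j ∈ intr 0 L
  · simp [extZ, hj, Pi.sup_apply]
  · by_cases hb : j ∈ bdry 0 L
    · simp only [extZ, dif_neg hj, if_pos hb]
      exact (max_eq_right (hle j hb)).symm
    · simp [extZ, hj, hb]

lemma extZ_le_sup (h₁ h₂ : V → ℤ) (hle : ∀ j ∈ bdry 0 L, h₁ j ≤ h₂ j) (a b : Cfg L) (j : V) :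
    extZ L h₁ a j ≤ extZ L h₂ (a ⊔ b) j := by
  rw [extZ_sup h₁ h₂ hle a b j]
  exact le_max_left _ _

lemma energy_lattice (h₁ h₂ : V → ℤ) (hle : ∀ j ∈ bdry 0 L, h₁ j ≤ h₂ j) (a b : Cfg L) :
    energyI 0 L (extZ L h₁ (a ⊓ b)) + energyI 0 L (extZ L h₂ (a ⊔ b))
      ≤ energyI 0 L (extZ L h₁ a) + energyI 0 L (extZ L h₂ b) := by
  rw [energyI, energyI, energyI, energyI, ← Finset.sum_add_distrib, ← Finset.sum_add_distrib]
  refine Finset.sum_le_sum fun p _ => ?_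
  rw [extZ_inf h₁ h₂ hle a b p.1, extZ_inf h₁ h₂ hle a b p.2,
    extZ_sup h₁ h₂ hle a b p.1, extZ_sup h₁ h₂ hle a b p.2]
  push_cast [Int.cast_min, Int.cast_max]
  exact quad_ineq _ _ _ _

lemma weight_holley {β : ℝ} (hβ : 0 < β) (h₁ h₂ : V → ℤ)
    (hle : ∀ j ∈ bdry 0 L, h₁ j ≤ h₂ j) (a b : Cfg L) :
    ivWeight 0 L β (extZ L h₁ a) * ivWeight 0 L β (extZ L h₂ b)
      ≤ ivWeight 0 L β (extZ L h₁ (a ⊓ b)) * ivWeight 0 L β (extZ L h₂ (a ⊔ b)) := by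
  rw [ivWeight, ivWeight, ivWeight, ivWeight, ← Real.exp_add, ← Real.exp_add]
  apply Real.exp_le_exp.2
  have hE := energy_lattice h₁ h₂ hle a b
  nlinarith [hβ.le, hE]

lemma tsum_four_functions {α : Type} [DistribLattice α] {f₁ f₂ f₃ f₄ : α → ℝ}
    (h₁ : ∀ a, 0 ≤ f₁ a) (h₂ : ∀ a, 0 ≤ f₂ a) (h₃ : ∀ a, 0 ≤ f₃ a) (h₄ : ∀ a, 0 ≤ f₄ a)
    (hs₁ : Summable f₁) (hs₂ : Summable f₂) (hs₃ : Summable f₃) (hs₄ : Summable f₄)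
    (h : ∀ a b, f₁ a * f₂ b ≤ f₃ (a ⊓ b) * f₄ (a ⊔ b)) :
    (∑' a, f₁ a) * (∑' a, f₂ a) ≤ (∑' a, f₃ a) * (∑' a, f₄ a) := by
  classical
  have key : ∀ F : Finset α,
      (∑ a ∈ F, f₁ a) * (∑ a ∈ F, f₂ a) ≤ (∑' a, f₃ a) * (∑' a, f₄ a) := by
    intro F
    refine (four_functions_theorem f₁ f₂ f₃ f₄ (fun a => h₁ a) (fun a => h₂ a)
      (fun a => h₃ a) (fun a => h₄ a) h F F).trans ?_
    refine mul_le_mul (Summable.sum_le_tsum _ (fun i _ => h₃ i) hs₃)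
      (Summable.sum_le_tsum _ (fun i _ => h₄ i) hs₄)
      (Finset.sum_nonneg fun i _ => h₄ i) (tsum_nonneg h₃)
  have ht : Filter.Tendsto (fun F : Finset α => (∑ a ∈ F, f₁ a) * (∑ a ∈ F, f₂ a))
      Filter.atTop (nhds ((∑' a, f₁ a) * (∑' a, f₂ a))) :=
    Filter.Tendsto.mul hs₁.hasSum hs₂.hasSum
  exact le_of_tendsto' ht key

lemma ivProb_mono (hL : 2 < L) {β : ℝ} (hβ : 0 < β) (h₁ h₂ : V → ℤ)
    (hle : ∀ j ∈ bdry 0 L, h₁ j ≤ h₂ j) (B : Set (V → ℤ))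
    (hB : ∀ m m' : V → ℤ, (∀ j, m j ≤ m' j) → m ∈ B → m' ∈ B) :
    ivProb 0 L β h₁ B ≤ ivProb 0 L β h₂ B := by
  classical
  have sW₁ := summable_weight hL hβ h₁
  have sW₂ := summable_weight hL hβ h₂
  have sg₁ : Summable (fun φ : Cfg L =>
      if extZ L h₁ φ ∈ B then ivWeight 0 L β (extZ L h₁ φ) else 0) := by
    refine Summable.of_nonneg_of_le (fun φ => ?_) (fun φ => ?_) sW₁
    · split_ifs
      · exact (Real.exp_pos _).le
      · exact le_refl 0
    · split_ifs
      · exact le_refl _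
      · exact (Real.exp_pos _).le
  have sg₂ : Summable (fun φ : Cfg L =>
      if extZ L h₂ φ ∈ B then ivWeight 0 L β (extZ L h₂ φ) else 0) := by
    refine Summable.of_nonneg_of_le (fun φ => ?_) (fun φ => ?_) sW₂
    · split_ifs
      · exact (Real.exp_pos _).le
      · exact le_refl 0
    · split_ifs
      · exact le_refl _
      · exact (Real.exp_pos _).le
  have hZ₁ : 0 < ivZ 0 L β h₁ := by
    rw [ivZ_eq]
    refine lt_of_lt_of_le (Real.exp_pos _)
      (Summable.le_tsum sW₁ (fun _ => 0) fun j _ => (Real.exp_pos _).le)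
  have hZ₂ : 0 < ivZ 0 L β h₂ := by
    rw [ivZ_eq]
    refine lt_of_lt_of_le (Real.exp_pos _)
      (Summable.le_tsum sW₂ (fun _ => 0) fun j _ => (Real.exp_pos _).le)
  have key := tsum_four_functions
    (f₁ := fun φ : Cfg L => if extZ L h₁ φ ∈ B then ivWeight 0 L β (extZ L h₁ φ) else 0)
    (f₂ := fun φ : Cfg L => ivWeight 0 L β (extZ L h₂ φ))
    (f₃ := fun φ : Cfg L => ivWeight 0 L β (extZ L h₁ φ))
    (f₄ := fun φ : Cfg L => if extZ L h₂ φ ∈ B then ivWeight 0 L β (extZ L h₂ φ) else 0)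
    (fun φ => by split_ifs; exacts [(Real.exp_pos _).le, le_refl 0])
    (fun φ => (Real.exp_pos _).le) (fun φ => (Real.exp_pos _).le)
    (fun φ => by split_ifs; exacts [(Real.exp_pos _).le, le_refl 0])
    sg₁ sW₂ sW₁ sg₂ ?_
  · rw [ivProb, ivProb, div_le_div_iff₀ hZ₁ hZ₂, ivNum_eq, ivNum_eq, ivZ_eq, ivZ_eq]
    calc (∑' φ : Cfg L, if extZ L h₁ φ ∈ B then ivWeight 0 L β (extZ L h₁ φ) else 0)
          * (∑' φ : Cfg L, ivWeight 0 L β (extZ L h₂ φ))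
        ≤ (∑' φ : Cfg L, ivWeight 0 L β (extZ L h₁ φ))
          * (∑' φ : Cfg L, if extZ L h₂ φ ∈ B then ivWeight 0 L β (extZ L h₂ φ) else 0) := key
      _ = (∑' φ : Cfg L, if extZ L h₂ φ ∈ B then ivWeight 0 L β (extZ L h₂ φ) else 0)
          * (∑' φ : Cfg L, ivWeight 0 L β (extZ L h₁ φ)) := mul_comm _ _
  · intro a b
    by_cases hmem : extZ L h₁ a ∈ B
    · have hmem2 : extZ L h₂ (a ⊔ b) ∈ B :=
        hB _ _ (extZ_le_sup h₁ h₂ hle a b) hmem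
      rw [if_pos hmem, if_pos hmem2]
      exact weight_holley hβ h₁ h₂ hle a b
    · rw [if_neg hmem, zero_mul]
      refine mul_nonneg (Real.exp_pos _).le ?_
      split_ifs
      · exact (Real.exp_pos _).le
      · exact le_refl 0
end IVGFF



/-- The probabilities that `max_{j∈A} m_j ≥ x` and that
`min_{j∈A} m_j ≥ −x` are increasing in the boundary condition of the IV-GFF. -/
theorem iv_monotonicity_max_min (L : ℕ) (hL : 2 < L) (β : ℝ) (hβ : 0 < β)
    (x : ℝ) (hx : 0 < x) (A : Finset IVGFF.V) (hA : A.Nonempty)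
    (hAsub : A ⊆ IVGFF.box 0 L)
    (h₁ h₂ : IVGFF.V → ℤ) (hle : ∀ j ∈ IVGFF.bdry 0 L, h₁ j ≤ h₂ j) :
    IVGFF.ivProb 0 L β h₁ {m | ∃ j ∈ A, x ≤ (m j : ℝ)} ≤
        IVGFF.ivProb 0 L β h₂ {m | ∃ j ∈ A, x ≤ (m j : ℝ)} ∧
      IVGFF.ivProb 0 L β h₁ {m | ∀ j ∈ A, -x ≤ (m j : ℝ)} ≤
        IVGFF.ivProb 0 L β h₂ {m | ∀ j ∈ A, -x ≤ (m j : ℝ)} := by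
  constructor
  · refine IVGFF.ivProb_mono hL hβ h₁ h₂ hle _ ?_
    rintro m m' hmm ⟨j, hjA, hx⟩
    exact ⟨j, hjA, hx.trans (Int.cast_le.2 (hmm j))⟩
  · refine IVGFF.ivProb_mono hL hβ h₁ h₂ hle _ ?_
    intro m m' hmm hall j hjA
    exact (hall j hjA).trans (Int.cast_le.2 (hmm j))
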